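/- Let G be a group. For every x in the derived subgroup [G,G] and every a ∈ G, the element (x ⊗ a)(a ⊗ x) is the identity in the nonabelian tensor square G ⊗ G. -/

import Mathlib

/- Nonabelian tensor square framework (Brown–Loday). -/

namespace NATensor

variable (G : Type*) [Group G]

/-- The relator set for the nonabelian tensor square of `G`:
`g g' ⊗ h = (ᵍg' ⊗ ᵍh)(g ⊗ h)` and `g ⊗ h h' = (g ⊗ h)(ʰg ⊗ ʰh')`. -/
def rels : Set (FreeGroup (G × G)) :=
  {r | (∃ g g' h : G,
          r = FreeGroup.of (g * g', h) *
              (FreeGroup.of (g * g' * g⁻¹, g * h * g⁻¹) * FreeGroup.of (g, h))⁻¹) ∨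
       (∃ g h h' : G,
          r = FreeGroup.of (g, h * h') *
              (FreeGroup.of (g, h) * FreeGroup.of (h * g * h⁻¹, h * h' * h⁻¹))⁻¹)}

/-- The nonabelian tensor square `G ⊗ G`. -/
abbrev TS := PresentedGroup (rels G)

variable {G}

/-- The generator `g ⊗ h` of the nonabelian tensor square. -/
def tmul (g h : G) : TS G := PresentedGroup.of (g, h)

lemma mk_rel_eq_one {r : FreeGroup (G × G)} (hr : r ∈ rels G) :
    (PresentedGroup.mk (rels G) r : TS G) = 1 :=
  (QuotientGroup.eq_one_iff r).mpr (Subgroup.subset_normalClosure hr)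

lemma tmul_rel₁ (g g' h : G) :
    tmul (g * g') h = tmul (g * g' * g⁻¹) (g * h * g⁻¹) * tmul g h := by
  have h1 := mk_rel_eq_one (G := G) (Or.inl ⟨g, g', h, rfl⟩)
  simp only [map_mul, map_inv, mul_inv_eq_one] at h1
  exact h1

lemma tmul_rel₂ (g h h' : G) :
    tmul g (h * h') = tmul g h * tmul (h * g * h⁻¹) (h * h' * h⁻¹) := by
  have h1 := mk_rel_eq_one (G := G) (Or.inr ⟨g, h, h', rfl⟩)
  simp only [map_mul, map_inv, mul_inv_eq_one] at h1
  exact h1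

variable (G)

/-- The homomorphism `κ : G ⊗ G → G`, `g ⊗ h ↦ [g,h] = g h g⁻¹ h⁻¹` (its image is `[G,G]`). -/
def kappa : TS G →* G :=
  PresentedGroup.toGroup (f := fun x : G × G => x.1 * x.2 * x.1⁻¹ * x.2⁻¹) (by
    rintro r (⟨g, g', h, rfl⟩ | ⟨g, h, h', rfl⟩) <;>
      simp only [map_mul, map_inv, FreeGroup.lift_apply_of] <;> group)

variable {G}

@[simp] lemma kappa_tmul (g h : G) : kappa G (tmul g h) = g * h * g⁻¹ * h⁻¹ :=
  PresentedGroup.toGroup.of _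

variable (G)

/-- `J(G) = ker κ ≅ π₃(SK(G,1))`. -/
def J : Subgroup (TS G) := (kappa G).ker

/-- `∇(G)`: the (normal) subgroup of `G ⊗ G` generated by the elements `x ⊗ x`. -/
def nabla : Subgroup (TS G) :=
  Subgroup.normalClosure {t | ∃ x : G, t = tmul x x}

/-- `Δ(G)`: the (normal) subgroup of `G ⊗ G` generated by the `(x ⊗ y)(y ⊗ x)`. -/
def delta : Subgroup (TS G) :=
  Subgroup.normalClosure {t | ∃ x y : G, t = tmul x y * tmul y x}

instance : (nabla G).Normal := Subgroup.normalClosure_normal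

instance : (delta G).Normal := Subgroup.normalClosure_normal

/-- The exterior square `G ∧ G = (G ⊗ G)/∇(G)`. -/
abbrev ES := TS G ⧸ nabla G

/-- The symmetric square `G ⊗̃ G = (G ⊗ G)/Δ(G)`. -/
abbrev SS := TS G ⧸ delta G

variable {G}

/-- The element `g ∧ h` of the exterior square. -/
def emul (g h : G) : ES G := QuotientGroup.mk' (nabla G) (tmul g h)

/-- The image of `g ⊗ h` in the symmetric square. -/
def smul (g h : G) : SS G := QuotientGroup.mk' (delta G) (tmul g h)

variable {H : Type*} [Group H]

/-- The induced homomorphism `G ⊗ G → H ⊗ H` of a homomorphism `f : G → H`. -/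
def tmap (f : G →* H) : TS G →* TS H :=
  PresentedGroup.toGroup (f := fun x : G × G => tmul (f x.1) (f x.2)) (by
    rintro r (⟨g, g', h, rfl⟩ | ⟨g, h, h', rfl⟩) <;>
      simp only [map_mul, map_inv, FreeGroup.lift_apply_of, mul_inv_eq_one]
    · rw [tmul_rel₁]
    · rw [tmul_rel₂])

@[simp] lemma tmap_tmul (f : G →* H) (g h : G) :
    tmap f (tmul g h) = tmul (f g) (f h) :=
  PresentedGroup.toGroup.of _

lemma nabla_le_comap_nabla (f : G →* H) :
    nabla G ≤ MonoidHom.ker ((QuotientGroup.mk' (nabla H)).comp (tmap f)) := by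
  refine Subgroup.normalClosure_le_normal ?_
  rintro _ ⟨y, rfl⟩
  simp only [SetLike.mem_coe, MonoidHom.mem_ker, MonoidHom.comp_apply, tmap_tmul,
    QuotientGroup.mk'_apply, QuotientGroup.eq_one_iff]
  exact Subgroup.subset_normalClosure ⟨f y, rfl⟩

lemma delta_le_comap_delta (f : G →* H) :
    delta G ≤ MonoidHom.ker ((QuotientGroup.mk' (delta H)).comp (tmap f)) := by
  refine Subgroup.normalClosure_le_normal ?_
  rintro _ ⟨x, y, rfl⟩
  simp only [SetLike.mem_coe, MonoidHom.mem_ker, MonoidHom.comp_apply, map_mul, tmap_tmul,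
    QuotientGroup.mk'_apply, ← QuotientGroup.mk_mul, QuotientGroup.eq_one_iff]
  exact Subgroup.subset_normalClosure ⟨f x, f y, rfl⟩

/-- The induced homomorphism `G ∧ G → H ∧ H` of a homomorphism `f : G → H`. -/
def emap (f : G →* H) : ES G →* ES H :=
  QuotientGroup.lift (nabla G) ((QuotientGroup.mk' (nabla H)).comp (tmap f))
    (fun x hx => MonoidHom.mem_ker.mp (nabla_le_comap_nabla f hx))

@[simp] lemma emap_emul (f : G →* H) (g h : G) :
    emap f (emul g h) = emul (f g) (f h) := by
  simp [emap, emul, QuotientGroup.mk'_apply, QuotientGroup.lift_mk']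
  exact (QuotientGroup.lift_mk (g := tmul g h) ..).trans (congrArg (QuotientGroup.mk' (nabla H)) (tmap_tmul f g h))

/-- The induced homomorphism `G ⊗̃ G → H ⊗̃ H` of a homomorphism `f : G → H`. -/
def smap (f : G →* H) : SS G →* SS H :=
  QuotientGroup.lift (delta G) ((QuotientGroup.mk' (delta H)).comp (tmap f))
    (fun x hx => MonoidHom.mem_ker.mp (delta_le_comap_delta f hx))

variable (G)

lemma nabla_le_ker_kappa : nabla G ≤ (kappa G).ker := by
  refine Subgroup.normalClosure_le_normal ?_
  rintro _ ⟨x, rfl⟩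
  simp only [SetLike.mem_coe, MonoidHom.mem_ker, kappa_tmul]
  group

/-- The homomorphism `κ' : G ∧ G → G`, `g ∧ h ↦ [g,h]` (its image is `[G,G]`). -/
def kappa' : ES G →* G :=
  QuotientGroup.lift (nabla G) (kappa G)
    (fun x hx => MonoidHom.mem_ker.mp (nabla_le_ker_kappa G hx))

/-- The Schur multiplier `M(G) = ker κ' ≅ H₂(G)`. -/
def M : Subgroup (ES G) := (kappa' G).ker

/-- `J̃(G) = J(G)/Δ(G) ≅ π₂ˢ(K(G,1))`, realized as the image of `J(G)` in `G ⊗̃ G`. -/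
def Jt : Subgroup (SS G) := Subgroup.map (QuotientGroup.mk' (delta G)) (J G)

/-- `∇(G)/Δ(G)`, realized as the image of `∇(G)` in `G ⊗̃ G`. -/
def nablaBar : Subgroup (SS G) := Subgroup.map (QuotientGroup.mk' (delta G)) (nabla G)

end NATensor


namespace NATensor

variable {G : Type*} [Group G]

lemma tmul_congr {x₁ x₂ y₁ y₂ : G} (hx : x₁ = x₂) (hy : y₁ = y₂) :
    tmul x₁ y₁ = tmul x₂ y₂ := by rw [hx, hy]

lemma hom_ext {M : Type*} [Group M] {f₁ f₂ : TS G →* M}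
    (h : ∀ g h' : G, f₁ (tmul g h') = f₂ (tmul g h')) : f₁ = f₂ :=
  PresentedGroup.ext fun x => h x.1 x.2

/-- The conjugation action of `G` on `G ⊗ G`. -/
def phi (a : G) : TS G →* TS G := tmap (MulAut.conj a).toMonoidHom

@[simp] lemma phi_tmul (a x y : G) :
    phi a (tmul x y) = tmul (a * x * a⁻¹) (a * y * a⁻¹) := by
  simp [phi, tmap_tmul]

lemma phi_phi (a b : G) (t : TS G) : phi a (phi b t) = phi (a * b) t := by
  have h1 : (phi a).comp (phi b) = phi (G := G) (a * b) :=
    hom_ext fun x y => by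
      simp only [MonoidHom.comp_apply, phi_tmul]
      exact tmul_congr (by group) (by group)
  exact DFunLike.congr_fun h1 t

lemma phi_one (t : TS G) : phi (1 : G) t = t := by
  have h1 : phi (G := G) 1 = MonoidHom.id (TS G) :=
    hom_ext fun x y => by simp [phi_tmul]
  rw [h1]; rfl

lemma one_tmul (h : G) : tmul (1 : G) h = 1 := by
  have h1 := tmul_rel₁ (1 : G) 1 h
  simp only [one_mul, mul_one, inv_one] at h1
  exact left_eq_mul.mp h1

lemma tmul_inv (g h : G) : tmul g⁻¹ (g * h * g⁻¹) = (tmul g h)⁻¹ := by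
  have h1 := tmul_rel₁ g g⁻¹ h
  simp only [mul_inv_cancel, one_mul, one_tmul] at h1
  exact eq_inv_of_mul_eq_one_left h1.symm

lemma tmul_inv' (g w : G) : tmul g⁻¹ w = (tmul g (g⁻¹ * w * g))⁻¹ := by
  have h1 := tmul_inv g (g⁻¹ * w * g)
  rw [show g * (g⁻¹ * w * g) * g⁻¹ = w by group] at h1
  exact h1

lemma P0 (g h x y : G) :
    tmul (g*h*x*h⁻¹*g⁻¹) (g*h*y*h⁻¹*g⁻¹) * tmul g h
      = tmul g h * tmul (h*g*x*g⁻¹*h⁻¹) (h*g*y*g⁻¹*h⁻¹) := by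
  have c1 : tmul (g*x) (h*y) = tmul (g*x*g⁻¹) (g*(h*y)*g⁻¹) * tmul g (h*y) :=
    tmul_rel₁ g x (h*y)
  have c2 : tmul (g*x*g⁻¹) (g*(h*y)*g⁻¹)
      = tmul (g*x*g⁻¹) ((g*h*g⁻¹) * (g*y*g⁻¹)) := tmul_congr rfl (by group)
  have c3 := tmul_rel₂ (g*x*g⁻¹) (g*h*g⁻¹) (g*y*g⁻¹)
  have c4 : tmul ((g*h*g⁻¹) * (g*x*g⁻¹) * (g*h*g⁻¹)⁻¹)
        ((g*h*g⁻¹) * (g*y*g⁻¹) * (g*h*g⁻¹)⁻¹)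
      = tmul (g*h*x*h⁻¹*g⁻¹) (g*h*y*h⁻¹*g⁻¹) := tmul_congr (by group) (by group)
  have c5 := tmul_rel₂ g h y
  have e1 : tmul (g*x) (h*y)
      = tmul (g*x*g⁻¹) (g*h*g⁻¹) * tmul (g*h*x*h⁻¹*g⁻¹) (g*h*y*h⁻¹*g⁻¹)
        * (tmul g h * tmul (h*g*h⁻¹) (h*y*h⁻¹)) := by
    rw [c1, c2, c3, c4, c5]
  have d1 : tmul (g*x) (h*y) = tmul (g*x) h * tmul (h*(g*x)*h⁻¹) (h*y*h⁻¹) :=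
    tmul_rel₂ (g*x) h y
  have d2 : tmul (g*x) h = tmul (g*x*g⁻¹) (g*h*g⁻¹) * tmul g h := tmul_rel₁ g x h
  have d3 : tmul (h*(g*x)*h⁻¹) (h*y*h⁻¹)
      = tmul ((h*g*h⁻¹)*(h*x*h⁻¹)) (h*y*h⁻¹) := tmul_congr (by group) rfl
  have d4 := tmul_rel₁ (h*g*h⁻¹) (h*x*h⁻¹) (h*y*h⁻¹)
  have d5 : tmul ((h*g*h⁻¹)*(h*x*h⁻¹)*(h*g*h⁻¹)⁻¹)
        ((h*g*h⁻¹)*(h*y*h⁻¹)*(h*g*h⁻¹)⁻¹)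
      = tmul (h*g*x*g⁻¹*h⁻¹) (h*g*y*g⁻¹*h⁻¹) := tmul_congr (by group) (by group)
  have e2 : tmul (g*x) (h*y)
      = tmul (g*x*g⁻¹) (g*h*g⁻¹) * tmul g h
        * (tmul (h*g*x*g⁻¹*h⁻¹) (h*g*y*g⁻¹*h⁻¹) * tmul (h*g*h⁻¹) (h*y*h⁻¹)) := by
    rw [d1, d2, d3, d4, d5]
  have e3 := e1.symm.trans e2
  have e4 : tmul (g*h*x*h⁻¹*g⁻¹) (g*h*y*h⁻¹*g⁻¹)
        * (tmul g h * tmul (h*g*h⁻¹) (h*y*h⁻¹))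
      = tmul g h * (tmul (h*g*x*g⁻¹*h⁻¹) (h*g*y*g⁻¹*h⁻¹)
        * tmul (h*g*h⁻¹) (h*y*h⁻¹)) :=
    mul_left_cancel (by simpa only [mul_assoc] using e3)
  have e5 : (tmul (g*h*x*h⁻¹*g⁻¹) (g*h*y*h⁻¹*g⁻¹) * tmul g h)
        * tmul (h*g*h⁻¹) (h*y*h⁻¹)
      = (tmul g h * tmul (h*g*x*g⁻¹*h⁻¹) (h*g*y*g⁻¹*h⁻¹))
        * tmul (h*g*h⁻¹) (h*y*h⁻¹) := by
    simpa only [mul_assoc] using e4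
  exact mul_right_cancel e5

lemma P0' (g h u v : G) :
    tmul (g*h*g⁻¹*h⁻¹*u*h*g*h⁻¹*g⁻¹) (g*h*g⁻¹*h⁻¹*v*h*g*h⁻¹*g⁻¹) * tmul g h
      = tmul g h * tmul u v := by
  have h0 := P0 g h (g⁻¹*h⁻¹*u*h*g) (g⁻¹*h⁻¹*v*h*g)
  rw [tmul_congr (show g*h*(g⁻¹*h⁻¹*u*h*g)*h⁻¹*g⁻¹ = g*h*g⁻¹*h⁻¹*u*h*g*h⁻¹*g⁻¹ by group)
        (show g*h*(g⁻¹*h⁻¹*v*h*g)*h⁻¹*g⁻¹ = g*h*g⁻¹*h⁻¹*v*h*g*h⁻¹*g⁻¹ by group),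
      tmul_congr (show h*g*(g⁻¹*h⁻¹*u*h*g)*g⁻¹*h⁻¹ = u by group)
        (show h*g*(g⁻¹*h⁻¹*v*h*g)*g⁻¹*h⁻¹ = v by group)] at h0
  exact h0

lemma peiffer_gen (g h : G) (t : TS G) :
    tmul g h * t * (tmul g h)⁻¹ = phi (g*h*g⁻¹*h⁻¹) t := by
  have h1 : (MulAut.conj (tmul g h)).toMonoidHom = phi (G := G) (g*h*g⁻¹*h⁻¹) := by
    apply hom_ext
    intro u v
    simp only [MulEquiv.coe_toMonoidHom, MulAut.conj_apply, phi_tmul]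
    rw [tmul_congr (show g*h*g⁻¹*h⁻¹*u*(g*h*g⁻¹*h⁻¹)⁻¹ = g*h*g⁻¹*h⁻¹*u*h*g*h⁻¹*g⁻¹ by group)
          (show g*h*g⁻¹*h⁻¹*v*(g*h*g⁻¹*h⁻¹)⁻¹ = g*h*g⁻¹*h⁻¹*v*h*g*h⁻¹*g⁻¹ by group)]
    exact mul_inv_eq_iff_eq_mul.mpr (P0' g h u v).symm
  have h2 := DFunLike.congr_fun h1 t
  simpa [MulAut.conj_apply] using h2

lemma mk_pure (x : G × G) :
    PresentedGroup.mk (rels G) (FreeGroup.of x) = tmul x.1 x.2 := rfl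

lemma peiffer (p t : TS G) : p * t * p⁻¹ = phi (kappa G p) t := by
  obtain ⟨w, rfl⟩ := PresentedGroup.mk_surjective (rels G) p
  induction w using FreeGroup.induction_on generalizing t with
  | C1 => simp [phi_one]
  | of x =>
    rw [mk_pure, kappa_tmul]
    exact peiffer_gen x.1 x.2 t
  | inv_of x ih =>
    simp only [map_inv, inv_inv]
    rw [mk_pure] at ih ⊢
    rw [kappa_tmul] at ih ⊢
    have h5 := ih (phi (x.1 * x.2 * x.1⁻¹ * x.2⁻¹)⁻¹ t)
    rw [phi_phi, mul_inv_cancel, phi_one] at h5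
    calc (tmul x.1 x.2)⁻¹ * t * tmul x.1 x.2
        = (tmul x.1 x.2)⁻¹
            * (tmul x.1 x.2 * phi (x.1 * x.2 * x.1⁻¹ * x.2⁻¹)⁻¹ t * (tmul x.1 x.2)⁻¹)
            * tmul x.1 x.2 := by rw [h5]
      _ = phi (x.1 * x.2 * x.1⁻¹ * x.2⁻¹)⁻¹ t := by group
  | mul w₁ w₂ ih₁ ih₂ =>
    simp only [map_mul]
    set P := PresentedGroup.mk (rels G) w₁
    set Q := PresentedGroup.mk (rels G) w₂
    rw [show P*Q*t*(P*Q)⁻¹ = P*(Q*t*Q⁻¹)*P⁻¹ by group, ih₂ t, ih₁ _, phi_phi]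

lemma I_gen (g h a : G) :
    tmul (g*h*g⁻¹*h⁻¹) a = tmul g h * (phi a (tmul g h))⁻¹ := by
  have h3 : phi a (tmul g h) = (tmul g a)⁻¹ * tmul g (a*h) := by
    rw [phi_tmul]
    exact eq_inv_mul_iff_mul_eq.mpr (tmul_rel₂ g a h).symm
  have h4 : tmul g (a*h) = tmul g h * tmul (h*g*h⁻¹) a := by
    have h0 := tmul_rel₂ g h (h⁻¹*a*h)
    rw [show h*(h⁻¹*a*h) = a*h by group, show a*h*h⁻¹ = a by group] at h0
    exact h0
  have l2 : tmul g h * (tmul (h*g*h⁻¹) a)⁻¹ * (tmul g h)⁻¹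
      = tmul (g*(h*g⁻¹*h⁻¹)*g⁻¹) (g*a*g⁻¹) := by
    rw [← tmul_inv (h*g*h⁻¹) a]
    have hp := peiffer_gen g h (tmul ((h*g*h⁻¹)⁻¹) ((h*g*h⁻¹)*a*(h*g*h⁻¹)⁻¹))
    rw [phi_tmul] at hp
    rw [hp]
    exact tmul_congr (by group) (by group)
  calc tmul (g*h*g⁻¹*h⁻¹) a
      = tmul (g*(h*g⁻¹*h⁻¹)) a := tmul_congr (by group) rfl
    _ = tmul (g*(h*g⁻¹*h⁻¹)*g⁻¹) (g*a*g⁻¹) * tmul g a := tmul_rel₁ g (h*g⁻¹*h⁻¹) a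
    _ = tmul g h * (tmul (h*g*h⁻¹) a)⁻¹ * (tmul g h)⁻¹ * tmul g a := by rw [l2]
    _ = tmul g h * (phi a (tmul g h))⁻¹ := by rw [h3, h4]; group

lemma inv_step {P : TS G} (ih : ∀ b : G, tmul (kappa G P) b = P * (phi b P)⁻¹) (a : G) :
    tmul (kappa G P)⁻¹ a = P⁻¹ * ((phi a P)⁻¹)⁻¹ := by
  have hfix : phi (kappa G P) P = P := by rw [← peiffer P P]; group
  have e3 : phi (kappa G P) (phi ((kappa G P)⁻¹ * a * kappa G P) P) = phi a P := by
    rw [phi_phi, show kappa G P * ((kappa G P)⁻¹ * a * kappa G P) = a * kappa G P by group,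
      ← phi_phi, hfix]
  have hp := peiffer P (phi ((kappa G P)⁻¹ * a * kappa G P) P)
  rw [e3] at hp
  calc tmul (kappa G P)⁻¹ a
      = (tmul (kappa G P) ((kappa G P)⁻¹ * a * kappa G P))⁻¹ := tmul_inv' _ _
    _ = (P * (phi ((kappa G P)⁻¹ * a * kappa G P) P)⁻¹)⁻¹ := by rw [ih]
    _ = phi ((kappa G P)⁻¹ * a * kappa G P) P * P⁻¹ := by group
    _ = P⁻¹ * ((phi a P)⁻¹)⁻¹ := by rw [inv_inv, ← hp]; group

lemma mul_step {P Q : TS G} {a : G}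
    (ih₁ : tmul (kappa G P) a = P * (phi a P)⁻¹)
    (ih₂ : tmul (kappa G Q) a = Q * (phi a Q)⁻¹) :
    tmul (kappa G P * kappa G Q) a = P * Q * (phi a P * phi a Q)⁻¹ := by
  calc tmul (kappa G P * kappa G Q) a
      = tmul (kappa G P * kappa G Q * (kappa G P)⁻¹) (kappa G P * a * (kappa G P)⁻¹)
          * tmul (kappa G P) a := tmul_rel₁ _ _ _
    _ = phi (kappa G P) (tmul (kappa G Q) a) * tmul (kappa G P) a := by rw [phi_tmul]
    _ = phi (kappa G P) (Q * (phi a Q)⁻¹) * (P * (phi a P)⁻¹) := by rw [ih₂, ih₁]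
    _ = P * (Q * (phi a Q)⁻¹) * P⁻¹ * (P * (phi a P)⁻¹) := by rw [peiffer]
    _ = P * Q * (phi a P * phi a Q)⁻¹ := by group

lemma tmul_kappa (p : TS G) (a : G) :
    tmul (kappa G p) a = p * (phi a p)⁻¹ := by
  obtain ⟨w, rfl⟩ := PresentedGroup.mk_surjective (rels G) p
  induction w using FreeGroup.induction_on generalizing a with
  | C1 => simp [one_tmul]
  | of x =>
    rw [mk_pure, kappa_tmul]
    exact I_gen x.1 x.2 a
  | inv_of x ih =>
    simp only [map_inv]
    exact inv_step ih a
  | mul w₁ w₂ ih₁ ih₂ =>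
    simp only [map_mul]
    exact mul_step (ih₁ a) (ih₂ a)

/-- The swap anti-automorphism `σ : g ⊗ h ↦ (h ⊗ g)⁻¹`. -/
def sigmaTS : TS G →* TS G :=
  PresentedGroup.toGroup (f := fun x : G × G => (tmul x.2 x.1)⁻¹) (by
    rintro r (⟨g, g', h, rfl⟩ | ⟨g, h, h', rfl⟩) <;>
      simp only [map_mul, map_inv, FreeGroup.lift_apply_of, mul_inv_eq_one]
    · rw [← mul_inv_rev, inv_inj]
      exact tmul_rel₂ h g g'
    · rw [← mul_inv_rev, inv_inj]
      exact tmul_rel₁ h h' g)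

@[simp] lemma sigma_tmul (g h : G) : sigmaTS (tmul g h) = (tmul h g)⁻¹ :=
  PresentedGroup.toGroup.of _

lemma sigma_sigma (t : TS G) : sigmaTS (sigmaTS t) = t := by
  have h1 : (sigmaTS (G := G)).comp sigmaTS = MonoidHom.id (TS G) :=
    hom_ext fun x y => by simp
  exact DFunLike.congr_fun h1 t

lemma kappa_sigma (t : TS G) : kappa G (sigmaTS t) = kappa G t := by
  have h1 : (kappa G).comp sigmaTS = kappa G :=
    hom_ext fun x y => by simp; group
  exact DFunLike.congr_fun h1 t

lemma sigma_phi (a : G) (t : TS G) : sigmaTS (phi a t) = phi a (sigmaTS t) := by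
  have h1 : (sigmaTS (G := G)).comp (phi a) = (phi a).comp sigmaTS :=
    hom_ext fun x y => by simp
  exact DFunLike.congr_fun h1 t

lemma tmul_kappa_swap (p : TS G) (a : G) :
    tmul a (kappa G p) = (tmul (kappa G p) a)⁻¹ := by
  have h1 := tmul_kappa p a
  have h2 := tmul_kappa (sigmaTS p) a
  rw [kappa_sigma] at h2
  have h3 := congrArg sigmaTS h2
  rw [map_mul, map_inv, sigma_sigma, sigma_phi, sigma_sigma, ← h1, sigma_tmul] at h3
  rw [← h3, inv_inv]

end NATensor

open NATensor in
/-- For every `x` in the derived subgroup `[G,G]` and every `a ∈ G`, the element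
`(x ⊗ a)(a ⊗ x)` is the identity in the nonabelian tensor square `G ⊗ G`. -/
theorem tmul_mul_tmul_swap_eq_one_of_mem_commutator (G : Type*) [Group G]
    (x : G) (hx : x ∈ commutator G) (a : G) :
    tmul x a * tmul a x = 1 := by
  have hrange : commutator G ≤ (kappa G).range := by
    rw [commutator_eq_closure, Subgroup.closure_le]
    rintro _ ⟨g, h, rfl⟩
    exact ⟨tmul g h, by rw [kappa_tmul, commutatorElement_def]⟩
  obtain ⟨p, rfl⟩ := hrange hx
  rw [tmul_kappa_swap, mul_inv_cancel]
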